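/- Let X be a flow space for G, locally compact and second-countable, and γ > 0. The quotient Y_axes of the axes space X_axes by the flow is locally compact, Hausdorff, regular, second-countable, and hence metrizable. -/

import Mathlib

open Pointwise

/-- The quotient of a subset of a flow space by the flow (the ℝ-action). -/
abbrev flowQuotient {X : Type*} [TopologicalSpace X] [AddAction ℝ X] (A : Set X) :
    Type _ :=
  Quotient (Setoid.comap (Subtype.val : A → X) (AddAction.orbitRel ℝ X))

open Filter Topology Set

section Flow
variable {G X : Type*} [Group G] [MetricSpace X] [MulAction G X] [AddAction ℝ X]

def FPeriodic (x : X) : Prop := ∃ t : ℝ, 0 < t ∧ t +ᵥ x = x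

lemma iter_rel (hcomm : ∀ (g : G) (t : ℝ) (x : X), t +ᵥ (g • x) = g • (t +ᵥ x))
    {g : G} {t : ℝ} {y : X} (h : t +ᵥ y = g • y) :
    ∀ n : ℕ, (n : ℝ) * t +ᵥ y = g ^ n • y := by
  intro n
  induction n with
  | zero => simp
  | succ n ih =>
    have e : ((n : ℝ) + 1) * t = t + (n : ℝ) * t := by ring
    rw [Nat.cast_succ, e, add_vadd, ih, hcomm, h, pow_succ, mul_smul]

lemma iter_period {t : ℝ} {y : X} (h : t +ᵥ y = y) (n : ℕ) : (n : ℝ) * t +ᵥ y = y := by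
  induction n with
  | zero => simp
  | succ n ih =>
    have e : ((n : ℝ) + 1) * t = t + (n : ℝ) * t := by ring
    rw [Nat.cast_succ, e, add_vadd, ih, h]

/-- pigeonhole along an ultrafilter -/
lemma ultra_pigeon {α β : Type*} (U : Ultrafilter α) (f : α → β) {S : Set β} (hS : S.Finite)
    (h : ∀ᶠ n in ↑U, f n ∈ S) : ∃ b, ∀ᶠ n in ↑U, f n = b := by
  have hmem : S ∈ Ultrafilter.map f U := h
  obtain ⟨b, -, hb⟩ := Ultrafilter.eq_pure_of_finite_mem hS hmem
  refine ⟨b, ?_⟩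
  have : {b} ∈ Ultrafilter.map f U := by rw [hb]; exact Filter.mem_pure.mpr rfl
  exact (by simpa [Ultrafilter.mem_map, Set.preimage, Set.mem_singleton_iff] using this : {x | f x = b} ∈ U)

lemma stab_pow (hproper : ∀ K : Set X, IsCompact K → {g : G | (K ∩ g • K).Nonempty}.Finite)
    {g : G} {x : X} (hg : g • x = x) : ∃ m : ℕ, 0 < m ∧ g ^ m = 1 := by
  have hfin : {h : G | ({x} ∩ h • ({x} : Set X)).Nonempty}.Finite :=
    hproper {x} isCompact_singleton
  have hsub : (MulAction.stabilizer G x : Set G) ⊆ {h : G | ({x} ∩ h • ({x} : Set X)).Nonempty} := by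
    intro h hh
    have : h • x = x := hh
    exact ⟨x, rfl, by simp [Set.smul_set_singleton, this]⟩
  have : Finite (MulAction.stabilizer G x) := (hfin.subset hsub).to_subtype
  have hgS : g ∈ MulAction.stabilizer G x := hg
  refine ⟨orderOf (⟨g, hgS⟩ : MulAction.stabilizer G x), orderOf_pos _, ?_⟩
  have := pow_orderOf_eq_one (⟨g, hgS⟩ : MulAction.stabilizer G x)
  have h2 := congrArg (Subtype.val) this
  simpa using h2

lemma tendsto_vadd_lim (hflowcont : Continuous fun p : ℝ × X => p.1 +ᵥ p.2)
    {l : Filter ℕ} {t : ℕ → ℝ} {a : ℕ → X} {τ : ℝ} {x : X}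
    (ht : Tendsto t l (𝓝 τ)) (ha : Tendsto a l (𝓝 x)) :
    Tendsto (fun n => t n +ᵥ a n) l (𝓝 (τ +ᵥ x)) :=
  (hflowcont.tendsto (τ, x)).comp (ht.prodMk_nhds ha)

/-- main extraction lemma: from eventual relations `t n +ᵥ a n = g n • a n` with
`t n ∈ (0, γ]` and `a n → x` along an ultrafilter, extract a limiting relation. -/
lemma extract [LocallyCompactSpace X]
    (hiso : ∀ g : G, Isometry (fun x : X => g • x))
    (hproper : ∀ K : Set X, IsCompact K → {g : G | (K ∩ g • K).Nonempty}.Finite)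
    (hflowcont : Continuous fun p : ℝ × X => p.1 +ᵥ p.2)
    {γ : ℝ} (hγ : 0 < γ) (U : Ultrafilter ℕ)
    {a : ℕ → X} {x : X} (ha : Tendsto a ↑U (𝓝 x))
    {t : ℕ → ℝ} {g : ℕ → G}
    (hrel : ∀ᶠ n in ↑U, 0 < t n ∧ t n ≤ γ ∧ t n +ᵥ a n = g n • a n) :
    ∃ (g₀ : G) (t₀ : ℝ), 0 ≤ t₀ ∧ t₀ ≤ γ ∧ t₀ +ᵥ x = g₀ • x ∧
      (∀ᶠ n in ↑U, g n = g₀) ∧ Tendsto t ↑U (𝓝 t₀) := by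
  obtain ⟨K, hKc, hKx⟩ := exists_compact_mem_nhds x
  have haK : ∀ᶠ n in ↑U, a n ∈ K := ha hKx
  -- limit of times
  have htIcc : ∀ᶠ n in ↑U, t n ∈ Set.Icc (0:ℝ) γ :=
    hrel.mono fun n hn => ⟨hn.1.le, hn.2.1⟩
  have hmap : ↑(U.map t) ≤ Filter.principal (Set.Icc (0:ℝ) γ) := by
    rw [Filter.le_principal_iff]; exact htIcc
  obtain ⟨t₀, ht₀Icc, ht₀⟩ := isCompact_Icc.ultrafilter_le_nhds (U.map t) hmap
  have htt : Tendsto t ↑U (𝓝 t₀) := ht₀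
  -- the compact set of flow translates
  set M : Set X := (fun p : ℝ × X => p.1 +ᵥ p.2) '' (Set.Icc (0:ℝ) γ ×ˢ K) with hM
  have hMc : IsCompact M := (isCompact_Icc.prod hKc).image hflowcont
  have hKM : K ⊆ M := fun y hy => ⟨(0, y), ⟨⟨le_refl _, hγ.le⟩, hy⟩, zero_vadd _ _⟩
  have hgF : ∀ᶠ n in ↑U, g n ∈ {h : G | (M ∩ h • M).Nonempty} := by
    filter_upwards [hrel, haK] with n hn hK'
    refine ⟨g n • a n, ?_, ?_⟩
    · rw [← hn.2.2]
      exact ⟨(t n, a n), ⟨⟨hn.1.le, hn.2.1⟩, hK'⟩, rfl⟩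
    · exact Set.smul_mem_smul_set (hKM hK')
  obtain ⟨g₀, hg₀⟩ := ultra_pigeon U g (hproper M hMc) hgF
  refine ⟨g₀, t₀, ht₀Icc.1, ht₀Icc.2, ?_, hg₀, htt⟩
  have h1 : Tendsto (fun n => t n +ᵥ a n) ↑U (𝓝 (t₀ +ᵥ x)) := tendsto_vadd_lim hflowcont htt ha
  have h2 : Tendsto (fun n => g₀ • a n) ↑U (𝓝 (g₀ • x)) :=
    ((hiso g₀).continuous.tendsto x).comp ha
  refine tendsto_nhds_unique_of_eventuallyEq h1 h2 ?_
  filter_upwards [hrel, hg₀] with n hn he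
  rw [hn.2.2, he]

lemma extract_np
    (hproper : ∀ K : Set X, IsCompact K → {g : G | (K ∩ g • K).Nonempty}.Finite)
    (hcomm : ∀ (g : G) (t : ℝ) (x : X), t +ᵥ (g • x) = g • (t +ᵥ x))
    (U : Ultrafilter ℕ)
    {a : ℕ → X} {x : X}
    {t : ℕ → ℝ} {g₀ : G} {t₀ : ℝ}
    (hrel : ∀ᶠ n in ↑U, 0 < t n ∧ t n +ᵥ a n = g₀ • a n)
    (hnp : ∀ᶠ n in ↑U, ¬ FPeriodic (a n))
    (ht₀0 : 0 ≤ t₀) (hlim : t₀ +ᵥ x = g₀ • x) :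
    (∀ d : ℕ, 0 < d → g₀ ^ d ≠ 1) ∧ 0 < t₀ := by
  have hord : ∀ d : ℕ, 0 < d → g₀ ^ d ≠ 1 := by
    intro d hd he
    obtain ⟨n, ⟨htn, hreln⟩, hnpn⟩ := (hrel.and hnp).exists
    exact hnpn ⟨(d : ℝ) * t n, by positivity,
      by rw [iter_rel hcomm hreln d, he, one_smul]⟩
  refine ⟨hord, ?_⟩
  rcases ht₀0.lt_or_eq with h | h
  · exact h
  · exfalso
    have hfix : g₀ • x = x := by rw [← hlim, ← h, zero_vadd]
    obtain ⟨m, hm, hme⟩ := stab_pow hproper hfix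
    exact hord m hm hme

/-- bounded positive periods in the limit give periodicity of the limit point. -/
lemma periodic_of_periods [_root_.Nonempty X]
    (hflowcont : Continuous fun p : ℝ × X => p.1 +ᵥ p.2)
    (U : Ultrafilter ℕ)
    {a : ℕ → X} {x : X} (ha : Tendsto a ↑U (𝓝 x))
    {σ : ℕ → ℝ} {B : ℝ}
    (h : ∀ᶠ n in ↑U, 0 < σ n ∧ σ n ≤ B ∧ σ n +ᵥ a n = a n) : FPeriodic x := by
  have hB : 0 < B := by
    obtain ⟨n, hn⟩ := h.exists
    exact hn.1.trans_le hn.2.1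
  have hIcc : ∀ᶠ n in ↑U, σ n ∈ Set.Icc (0:ℝ) B := h.mono fun n hn => ⟨hn.1.le, hn.2.1⟩
  have hmap : ↑(U.map σ) ≤ Filter.principal (Set.Icc (0:ℝ) B) := by
    rw [Filter.le_principal_iff]; exact hIcc
  obtain ⟨σ₀, hσ₀Icc, hσ₀⟩ := isCompact_Icc.ultrafilter_le_nhds (U.map σ) hmap
  have hσt : Tendsto σ ↑U (𝓝 σ₀) := hσ₀
  rcases hσ₀Icc.1.lt_or_eq with hpos | hzero
  · refine ⟨σ₀, hpos, ?_⟩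
    have h1 : Tendsto (fun n => σ n +ᵥ a n) ↑U (𝓝 (σ₀ +ᵥ x)) := tendsto_vadd_lim hflowcont hσt ha
    refine tendsto_nhds_unique_of_eventuallyEq h1 ha ?_
    exact h.mono fun n hn => hn.2.2
  · -- periods tend to zero: every positive real is a period of the limit
    refine ⟨1, one_pos, ?_⟩
    set r : ℕ → ℝ := fun n => 1 - (⌊1 / σ n⌋₊ : ℝ) * σ n with hr
    have hfacts : ∀ᶠ n in ↑U, 0 ≤ r n ∧ r n ≤ σ n ∧ (1:ℝ) +ᵥ a n = r n +ᵥ a n := by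
      filter_upwards [h] with n hn
      have hσpos := hn.1
      have hfl : (⌊1 / σ n⌋₊ : ℝ) ≤ 1 / σ n := Nat.floor_le (by positivity)
      have h1lt : 1 / σ n < (⌊1 / σ n⌋₊ : ℝ) + 1 := Nat.lt_floor_add_one _
      constructor
      · have h2 : (⌊1 / σ n⌋₊ : ℝ) * σ n ≤ (1 / σ n) * σ n :=
          mul_le_mul_of_nonneg_right hfl hσpos.le
        rw [div_mul_cancel₀ 1 hσpos.ne'] at h2
        simp only [hr]
        linarith
      constructor
      · have h2 : 1 / σ n * σ n < ((⌊1 / σ n⌋₊ : ℝ) + 1) * σ n :=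
          mul_lt_mul_of_pos_right h1lt hσpos
        rw [div_mul_cancel₀ 1 hσpos.ne', add_mul, one_mul] at h2
        simp only [hr]
        linarith
      · have hper : (⌊1 / σ n⌋₊ : ℝ) * σ n +ᵥ a n = a n := iter_period hn.2.2 _
        have : (1:ℝ) = r n + (⌊1 / σ n⌋₊ : ℝ) * σ n := by simp [hr]
        rw [this, add_vadd, hper]
    have hr0 : Tendsto r ↑U (𝓝 0) := by
      have hf := hfacts.mono fun n hn => hn.1
      have hg := hfacts.mono fun n hn => hn.2.1
      have hσ0 : Tendsto σ ↑U (𝓝 0) := by rwa [← hzero] at hσt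
      exact squeeze_zero' hf hg hσ0
    have h1 : Tendsto (fun n => (1:ℝ) +ᵥ a n) ↑U (𝓝 ((1:ℝ) +ᵥ x)) :=
      tendsto_vadd_lim hflowcont tendsto_const_nhds ha
    have h2 : Tendsto (fun n => r n +ᵥ a n) ↑U (𝓝 ((0:ℝ) +ᵥ x)) :=
      tendsto_vadd_lim hflowcont hr0 ha
    have := tendsto_nhds_unique_of_eventuallyEq h1 h2
      (hfacts.mono fun n hn => hn.2.2)
    rw [zero_vadd] at this
    exact this

/-- membership in the axes set -/
def InAxes (γ : ℝ) (x : X) : Prop :=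
  ¬ FPeriodic x ∧ ∃ (g : G) (t : ℝ), 0 < t ∧ t ≤ γ ∧ t +ᵥ x = g • x

/-- every point in the closure of the axes set satisfies a relation with time in `(0, γ]`. -/
lemma closure_rel [LocallyCompactSpace X]
    (hiso : ∀ g : G, Isometry (fun x : X => g • x))
    (hproper : ∀ K : Set X, IsCompact K → {g : G | (K ∩ g • K).Nonempty}.Finite)
    (hflowcont : Continuous fun p : ℝ × X => p.1 +ᵥ p.2)
    (hcomm : ∀ (g : G) (t : ℝ) (x : X), t +ᵥ (g • x) = g • (t +ᵥ x))
    {γ : ℝ} (hγ : 0 < γ) {x' : X}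
    (hx' : x' ∈ closure {x : X | InAxes (G := G) γ x}) :
    ∃ (g : G) (t : ℝ), 0 < t ∧ t ≤ γ ∧ t +ᵥ x' = g • x' := by
  obtain ⟨u, hu, hul⟩ := mem_closure_iff_seq_limit.mp hx'
  choose g t ht hγt hrel using fun n => (hu n).2
  set U : Ultrafilter ℕ := Ultrafilter.of atTop with hUdef
  have hU : (U : Filter ℕ) ≤ atTop := Ultrafilter.of_le _
  have hul' : Tendsto u ↑U (𝓝 x') := hul.mono_left hU
  obtain ⟨g₀, t₀, ht₀0, ht₀γ, hlim, hg₀, htt⟩ :=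
    extract hiso hproper hflowcont hγ U hul'
      (Filter.Eventually.of_forall fun n => ⟨ht n, hγt n, hrel n⟩)
  have hrel' : ∀ᶠ n in ↑U, 0 < t n ∧ t n +ᵥ u n = g₀ • u n := by
    filter_upwards [hg₀] with n he
    exact ⟨ht n, by rw [hrel n, he]⟩
  obtain ⟨-, ht₀pos⟩ := extract_np hproper hcomm U hrel'
    (Filter.Eventually.of_forall fun n => (hu n).1) ht₀0 hlim
  exact ⟨g₀, t₀, ht₀pos, ht₀γ, hlim⟩

lemma pow_eq_pow_ne {G : Type*} [Group G] {g : G} {a b : ℕ} (h : g ^ a = g ^ b) (hne : a ≠ b) :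
    ∃ d : ℕ, 0 < d ∧ g ^ d = 1 := by
  rcases hne.lt_or_gt with hab | hab
  · refine ⟨b - a, Nat.sub_pos_of_lt hab, ?_⟩
    have : g ^ (b - a) * g ^ a = 1 * g ^ a := by
      rw [← pow_add, Nat.sub_add_cancel hab.le, one_mul, h]
    exact mul_right_cancel this
  · refine ⟨a - b, Nat.sub_pos_of_lt hab, ?_⟩
    have : g ^ (a - b) * g ^ b = 1 * g ^ b := by
      rw [← pow_add, Nat.sub_add_cancel hab.le, one_mul, ← h]
    exact mul_right_cancel this

/-- the axes set is locally closed: around each of its points, its closure agrees with it. -/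
lemma locally_closed [LocallyCompactSpace X]
    (hiso : ∀ g : G, Isometry (fun x : X => g • x))
    (hproper : ∀ K : Set X, IsCompact K → {g : G | (K ∩ g • K).Nonempty}.Finite)
    (hflowcont : Continuous fun p : ℝ × X => p.1 +ᵥ p.2)
    (hcomm : ∀ (g : G) (t : ℝ) (x : X), t +ᵥ (g • x) = g • (t +ᵥ x))
    {γ : ℝ} (hγ : 0 < γ) {x : X} (hx : InAxes (G := G) γ x) :
    ∃ ε : ℝ, 0 < ε ∧ IsCompact (Metric.closedBall x ε) ∧
      closure {y : X | InAxes (G := G) γ y} ∩ Metric.closedBall x ε ⊆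
        {y : X | InAxes (G := G) γ y} := by
  haveI : _root_.Nonempty X := ⟨x⟩
  obtain ⟨K, hKc, hKx⟩ := exists_compact_mem_nhds x
  obtain ⟨δ, hδ, hδK⟩ := Metric.nhds_basis_closedBall.mem_iff.mp hKx
  by_contra hcon
  push_neg at hcon
  have key : ∀ n : ℕ, ∃ y, y ∈ closure {y : X | InAxes (G := G) γ y} ∧
      y ∈ Metric.closedBall x (δ / (n + 1)) ∧ y ∉ {y : X | InAxes (G := G) γ y} := by
    intro n
    have hεpos : 0 < δ / (n + 1 : ℝ) := by positivity
    have hsub : Metric.closedBall x (δ / (n + 1)) ⊆ K := by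
      refine subset_trans (Metric.closedBall_subset_closedBall ?_) hδK
      rw [div_le_iff₀ (by positivity)]
      nlinarith [hδ.le]
    have hcpt : IsCompact (Metric.closedBall x (δ / (n + 1))) :=
      hKc.of_isClosed_subset Metric.isClosed_closedBall hsub
    have := hcon _ hεpos hcpt
    obtain ⟨y, hy1, hy2⟩ := Set.not_subset.mp this
    exact ⟨y, hy1.1, hy1.2, hy2⟩
  choose u hucl hub hunot using key
  -- u tends to x
  have hdist : Tendsto (fun n : ℕ => dist (u n) x) atTop (𝓝 0) := by
    have hbnd : ∀ n : ℕ, dist (u n) x ≤ δ / (n + 1) := fun n => (hub n)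
    have hlim0 : Tendsto (fun n : ℕ => δ / (n + 1 : ℝ)) atTop (𝓝 0) := by
      have := tendsto_one_div_add_atTop_nhds_zero_nat (𝕜 := ℝ)
      have h2 := this.const_mul δ
      simpa [div_eq_mul_inv, mul_comm, mul_assoc, one_div] using h2
    exact squeeze_zero (fun n => dist_nonneg) hbnd hlim0
  have hul : Tendsto u atTop (𝓝 x) := tendsto_iff_dist_tendsto_zero.mpr hdist
  -- relations and periods
  have hrel0 : ∀ n, ∃ (g : G) (t : ℝ), 0 < t ∧ t ≤ γ ∧ t +ᵥ u n = g • u n :=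
    fun n => closure_rel hiso hproper hflowcont hcomm hγ (hucl n)
  choose g t ht hγt hrel using hrel0
  have hper0 : ∀ n, FPeriodic (u n) := by
    intro n
    by_contra hnp
    exact hunot n ⟨hnp, g n, t n, ht n, hγt n, hrel n⟩
  choose p hp hper using hper0
  set U : Ultrafilter ℕ := Ultrafilter.of atTop with hUdef
  have hU : (U : Filter ℕ) ≤ atTop := Ultrafilter.of_le _
  have hul' : Tendsto u ↑U (𝓝 x) := hul.mono_left hU
  obtain ⟨g₀, t₀, ht₀0, ht₀γ, hlim, hg₀, htt⟩ :=
    extract hiso hproper hflowcont hγ U hul'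
      (Filter.Eventually.of_forall fun n => ⟨ht n, hγt n, hrel n⟩)
  have hrelg₀ : ∀ᶠ n in ↑U, t n +ᵥ u n = g₀ • u n := by
    filter_upwards [hg₀] with n he
    rw [hrel n, he]
  by_cases hfin : ∃ d : ℕ, 0 < d ∧ g₀ ^ d = 1
  · obtain ⟨d, hd, he⟩ := hfin
    have : FPeriodic x := by
      refine periodic_of_periods hflowcont U hul' (σ := fun n => (d : ℝ) * t n)
        (B := (d : ℝ) * γ) ?_
      filter_upwards [hrelg₀] with n hr
      refine ⟨mul_pos (by exact_mod_cast hd) (ht n), ?_, ?_⟩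
      · have : (d : ℝ) * t n ≤ (d : ℝ) * γ :=
          mul_le_mul_of_nonneg_left (hγt n) (by positivity)
        exact this
      · rw [iter_rel hcomm hr d, he, one_smul]
    exact hx.1 this
  · push_neg at hfin
    set m : ℕ → ℕ := fun n => ⌈p n / t n⌉₊ with hm
    have huK : ∀ n, u n ∈ K := by
      intro n
      apply hδK
      refine Metric.closedBall_subset_closedBall ?_ (hub n)
      rw [div_le_iff₀ (by positivity)]
      nlinarith [hδ.le]
    have hfacts : ∀ᶠ n in ↑U, p n ≤ (m n : ℝ) * t n ∧ (m n : ℝ) * t n - p n ≤ γ ∧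
        g₀ ^ m n • u n = ((m n : ℝ) * t n - p n) +ᵥ u n := by
      filter_upwards [hrelg₀] with n hr
      have htn := ht n
      have h1 : p n / t n ≤ (m n : ℝ) := Nat.le_ceil _
      have hle : p n ≤ (m n : ℝ) * t n := by
        rw [div_le_iff₀ htn] at h1
        linarith
      have h2 : (m n : ℝ) < p n / t n + 1 :=
        Nat.ceil_lt_add_one (div_nonneg (hp n).le htn.le)
      have hlt : (m n : ℝ) * t n - p n ≤ γ := by
        have h3 : (m n : ℝ) * t n < p n + t n := by
          have h4 := mul_lt_mul_of_pos_right h2 htn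
          rw [add_mul, one_mul, div_mul_cancel₀ _ htn.ne'] at h4
          exact h4
        linarith [hγt n]
      refine ⟨hle, hlt, ?_⟩
      rw [← iter_rel hcomm hr (m n)]
      have : ((m n : ℝ) * t n - p n) +ᵥ (p n +ᵥ u n) = (m n : ℝ) * t n +ᵥ u n := by
        rw [← add_vadd, sub_add_cancel]
      rw [← this, hper n]
    set M : Set X := (fun q : ℝ × X => q.1 +ᵥ q.2) '' (Set.Icc (0:ℝ) γ ×ˢ K) with hMdef
    have hMc : IsCompact M := (isCompact_Icc.prod hKc).image hflowcont
    have hKM : K ⊆ M := fun y hy => ⟨(0, y), ⟨⟨le_refl _, hγ.le⟩, hy⟩, zero_vadd _ _⟩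
    have hgF : ∀ᶠ n in ↑U, g₀ ^ m n ∈ {h : G | (M ∩ h • M).Nonempty} := by
      filter_upwards [hfacts] with n hf
      refine ⟨((m n : ℝ) * t n - p n) +ᵥ u n, ?_, ?_⟩
      · have hmem : ((m n : ℝ) * t n - p n) ∈ Set.Icc (0:ℝ) γ :=
          ⟨by linarith [hf.1], hf.2.1⟩
        exact ⟨((m n : ℝ) * t n - p n, u n), Set.mem_prod.mpr ⟨hmem, huK n⟩, rfl⟩
      · rw [← hf.2.2]
        exact Set.smul_mem_smul_set (hKM (huK n))
    obtain ⟨h₀, hh₀⟩ := ultra_pigeon U (fun n => g₀ ^ m n) (hproper M hMc) hgF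
    by_cases hmv : ∃ v : ℕ, ∀ᶠ n in ↑U, m n = v
    · obtain ⟨v, hv⟩ := hmv
      have : FPeriodic x := by
        refine periodic_of_periods hflowcont U hul' (σ := p) (B := (v : ℝ) * γ + 1) ?_
        filter_upwards [hfacts, hv] with n hf hmn
        refine ⟨hp n, ?_, hper n⟩
        have : (m n : ℝ) * t n ≤ (v : ℝ) * γ := by
          rw [hmn]
          exact mul_le_mul_of_nonneg_left (hγt n) (by positivity)
        linarith [hf.1]
      exact hx.1 this
    · push_neg at hmv
      have hne : ∀ v : ℕ, ∀ᶠ n in ↑U, m n ≠ v := by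
        intro v
        exact hmv v
      obtain ⟨n₁, hn₁⟩ := hh₀.exists
      obtain ⟨n₂, hn₂, hn₂ne⟩ := (hh₀.and (hne (m n₁))).exists
      obtain ⟨d, hd, hde⟩ := pow_eq_pow_ne (hn₂.trans hn₁.symm) hn₂ne
      exact hfin d hd hde

/-- travel times cannot escape to infinity. -/
lemma no_escape [LocallyCompactSpace X]
    (hiso : ∀ g : G, Isometry (fun x : X => g • x))
    (hproper : ∀ K : Set X, IsCompact K → {g : G | (K ∩ g • K).Nonempty}.Finite)
    (hflowcont : Continuous fun p : ℝ × X => p.1 +ᵥ p.2)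
    (hcomm : ∀ (g : G) (t : ℝ) (x : X), t +ᵥ (g • x) = g • (t +ᵥ x))
    {γ : ℝ} (hγ : 0 < γ) (U : Ultrafilter ℕ)
    {a b : ℕ → X} {xa xb : X} (ha : Tendsto a ↑U (𝓝 xa)) (hb : Tendsto b ↑U (𝓝 xb))
    (haA : ∀ n, InAxes (G := G) γ (a n))
    {s : ℕ → ℝ} (hs : Tendsto s ↑U atTop)
    (heq : ∀ᶠ n in ↑U, s n +ᵥ a n = b n) : False := by
  choose g t ht hγt hrel using fun n => (haA n).2
  obtain ⟨g₀, t₀, ht₀0, ht₀γ, hlim, hg₀, htt⟩ :=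
    extract hiso hproper hflowcont hγ U ha
      (Filter.Eventually.of_forall fun n => ⟨ht n, hγt n, hrel n⟩)
  have hrelg₀ : ∀ᶠ n in ↑U, t n +ᵥ a n = g₀ • a n := by
    filter_upwards [hg₀] with n he
    rw [hrel n, he]
  obtain ⟨hinf, -⟩ := extract_np hproper hcomm U
    (hrelg₀.mono fun n hn => ⟨ht n, hn⟩)
    (Filter.Eventually.of_forall fun n => (haA n).1) ht₀0 hlim
  set q : ℕ → ℕ := fun n => ⌊s n / t n⌋₊ with hq
  obtain ⟨Ka, hKac, hKax⟩ := exists_compact_mem_nhds xa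
  obtain ⟨Kb, hKbc, hKbx⟩ := exists_compact_mem_nhds xb
  have haKa : ∀ᶠ n in ↑U, a n ∈ Ka := ha hKax
  have hbKb : ∀ᶠ n in ↑U, b n ∈ Kb := hb hKbx
  have hs0 : ∀ᶠ n in ↑U, 0 ≤ s n := hs.eventually_ge_atTop 0
  have hfacts : ∀ᶠ n in ↑U, 0 ≤ s n - (q n : ℝ) * t n ∧ s n - (q n : ℝ) * t n ≤ γ ∧
      b n = g₀ ^ q n • ((s n - (q n : ℝ) * t n) +ᵥ a n) := by
    filter_upwards [hrelg₀, hs0, heq] with n hr hsn hbe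
    have htn := ht n
    have hst : 0 ≤ s n / t n := div_nonneg hsn htn.le
    have h1 : (q n : ℝ) ≤ s n / t n := Nat.floor_le hst
    have h2 : s n / t n < (q n : ℝ) + 1 := Nat.lt_floor_add_one _
    have hr0 : 0 ≤ s n - (q n : ℝ) * t n := by
      have := mul_le_mul_of_nonneg_right h1 htn.le
      rw [div_mul_cancel₀ _ htn.ne'] at this
      linarith
    have hrγ : s n - (q n : ℝ) * t n ≤ γ := by
      have := mul_lt_mul_of_pos_right h2 htn
      rw [div_mul_cancel₀ _ htn.ne', add_mul, one_mul] at this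
      linarith [hγt n]
    refine ⟨hr0, hrγ, ?_⟩
    set c : X := (s n - (q n : ℝ) * t n) +ᵥ a n with hc
    have hcrel : t n +ᵥ c = g₀ • c := by
      rw [hc, ← add_vadd, add_comm, add_vadd, hr, hcomm]
    have := iter_rel hcomm hcrel (q n)
    rw [← this, hc, ← add_vadd, ← hbe]
    congr 1
    ring
  set M : Set X := (fun p : ℝ × X => p.1 +ᵥ p.2) '' (Set.Icc (0:ℝ) γ ×ˢ Ka) ∪ Kb with hMdef
  have hMc : IsCompact M := ((isCompact_Icc.prod hKac).image hflowcont).union hKbc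
  have hgF : ∀ᶠ n in ↑U, g₀ ^ q n ∈ {h : G | (M ∩ h • M).Nonempty} := by
    filter_upwards [hfacts, haKa, hbKb] with n hf hKa' hKb'
    refine ⟨b n, Set.mem_union_right _ hKb', ?_⟩
    rw [hf.2.2]
    refine Set.smul_mem_smul_set (Set.mem_union_left _ ?_)
    exact ⟨(s n - (q n : ℝ) * t n, a n), Set.mem_prod.mpr ⟨⟨hf.1, hf.2.1⟩, hKa'⟩, rfl⟩
  obtain ⟨h₀, hh₀⟩ := ultra_pigeon U (fun n => g₀ ^ q n) (hproper M hMc) hgF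
  have hne : ∀ v : ℕ, ∀ᶠ n in ↑U, q n ≠ v := by
    intro v
    have hsbig : ∀ᶠ n in ↑U, ((v : ℝ) + 1) * γ ≤ s n := hs.eventually_ge_atTop _
    filter_upwards [hsbig] with n hbig
    have htn := ht n
    have : ((v + 1 : ℕ) : ℝ) ≤ s n / t n := by
      rw [le_div_iff₀ htn]
      have h1 : ((v + 1 : ℕ) : ℝ) * t n ≤ ((v : ℝ) + 1) * γ := by
        push_cast
        have := hγt n
        nlinarith [htn.le]
      linarith
    have hqe : v + 1 ≤ q n := Nat.le_floor this
    omega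
  obtain ⟨n₁, hn₁⟩ := hh₀.exists
  obtain ⟨n₂, hn₂, hn₂ne⟩ := (hh₀.and (hne (q n₁))).exists
  obtain ⟨d, hd, hde⟩ := pow_eq_pow_ne (hn₂.trans hn₁.symm) hn₂ne
  exact hinf d hd hde

/-- the orbit relation is closed under limits within the axes set. -/
lemma rel_closed [LocallyCompactSpace X]
    (hiso : ∀ g : G, Isometry (fun x : X => g • x))
    (hproper : ∀ K : Set X, IsCompact K → {g : G | (K ∩ g • K).Nonempty}.Finite)
    (hflowcont : Continuous fun p : ℝ × X => p.1 +ᵥ p.2)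
    (hcomm : ∀ (g : G) (t : ℝ) (x : X), t +ᵥ (g • x) = g • (t +ᵥ x))
    {γ : ℝ} (hγ : 0 < γ)
    {a b : ℕ → X} {xa xb : X}
    (ha : Tendsto a atTop (𝓝 xa)) (hb : Tendsto b atTop (𝓝 xb))
    (haA : ∀ n, InAxes (G := G) γ (a n)) (hbA : ∀ n, InAxes (G := G) γ (b n))
    {s : ℕ → ℝ} (heq : ∀ n, s n +ᵥ a n = b n) :
    ∃ s₀ : ℝ, s₀ +ᵥ xa = xb := by
  set U : Ultrafilter ℕ := Ultrafilter.of atTop with hUdef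
  have hU : (U : Filter ℕ) ≤ atTop := Ultrafilter.of_le _
  have ha' : Tendsto a ↑U (𝓝 xa) := ha.mono_left hU
  have hb' : Tendsto b ↑U (𝓝 xb) := hb.mono_left hU
  by_cases hbnd : ∃ B : ℝ, ∀ᶠ n in ↑U, |s n| ≤ B
  · obtain ⟨B, hB⟩ := hbnd
    have hIcc : ∀ᶠ n in ↑U, s n ∈ Set.Icc (-B) B := by
      filter_upwards [hB] with n hn
      exact abs_le.mp hn
    have hmap : ↑(U.map s) ≤ Filter.principal (Set.Icc (-B) B) := by
      rw [Filter.le_principal_iff]; exact hIcc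
    obtain ⟨s₀, -, hs₀⟩ := isCompact_Icc.ultrafilter_le_nhds (U.map s) hmap
    have hst : Tendsto s ↑U (𝓝 s₀) := hs₀
    refine ⟨s₀, ?_⟩
    have h1 : Tendsto (fun n => s n +ᵥ a n) ↑U (𝓝 (s₀ +ᵥ xa)) :=
      tendsto_vadd_lim hflowcont hst ha'
    exact tendsto_nhds_unique_of_eventuallyEq h1 hb'
      (Filter.Eventually.of_forall heq)
  · exfalso
    push_neg at hbnd
    have habs : ∀ B : ℝ, ∀ᶠ n in ↑U, B < |s n| := by
      intro B
      have := hbnd B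
      have h2 : ∀ᶠ n in ↑U, ¬ |s n| ≤ B := this.mono fun n hn => not_le.mpr hn
      filter_upwards [h2] with n hn
      exact lt_of_not_ge hn
    by_cases hpos : ∀ᶠ n in ↑U, 0 ≤ s n
    · have hsat : Tendsto s ↑U atTop := by
        rw [tendsto_atTop]
        intro B
        filter_upwards [habs (|B|), hpos] with n h1 h2
        have : B < s n := by
          calc B ≤ |B| := le_abs_self B
          _ < |s n| := h1
          _ = s n := abs_of_nonneg h2
        exact this.le
      exact no_escape hiso hproper hflowcont hcomm hγ U ha' hb' haA hsat
        (Filter.Eventually.of_forall heq)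
    · have hneg : ∀ᶠ n in ↑U, s n < 0 := by
        have := Ultrafilter.eventually_not.mpr hpos
        filter_upwards [this] with n hn
        exact lt_of_not_ge hn
      have hsat : Tendsto (fun n => - s n) ↑U atTop := by
        rw [tendsto_atTop]
        intro B
        filter_upwards [habs (|B|), hneg] with n h1 h2
        have : B < - s n := by
          calc B ≤ |B| := le_abs_self B
          _ < |s n| := h1
          _ = - s n := abs_of_neg h2
        exact this.le
      have heq' : ∀ n, - s n +ᵥ b n = a n := by
        intro n
        rw [← heq n, ← add_vadd, neg_add_cancel, zero_vadd]
      exact no_escape hiso hproper hflowcont hcomm hγ U hb' ha' hbA hsat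
        (Filter.Eventually.of_forall heq')

end Flow

theorem stmt13 {G X : Type*} [Group G] [MetricSpace X] [MulAction G X] [AddAction ℝ X]
    [SecondCountableTopology X] [LocallyCompactSpace X]
    (hiso : ∀ g : G, Isometry (fun x : X => g • x))
    (hproper : ∀ K : Set X, IsCompact K → {g : G | (K ∩ g • K).Nonempty}.Finite)
    (hflowcont : Continuous fun p : ℝ × X => p.1 +ᵥ p.2)
    (hcomm : ∀ (g : G) (t : ℝ) (x : X), t +ᵥ (g • x) = g • (t +ᵥ x))
    (γ : ℝ) (hγ : 0 < γ)
    (Xaxes : Set X)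
    (hXaxes : Xaxes = {x : X | (¬ ∃ t : ℝ, 0 < t ∧ t +ᵥ x = x) ∧
      ∃ g : G, ∃ t : ℝ, 0 < t ∧ t ≤ γ ∧ t +ᵥ x = g • x}) :
    LocallyCompactSpace (flowQuotient Xaxes) ∧
      T2Space (flowQuotient Xaxes) ∧
      RegularSpace (flowQuotient Xaxes) ∧
      SecondCountableTopology (flowQuotient Xaxes) ∧
      TopologicalSpace.MetrizableSpace (flowQuotient Xaxes) := by
  letI S : Setoid (↥Xaxes) := Setoid.comap (Subtype.val : ↥Xaxes → X) (AddAction.orbitRel ℝ X)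
  have hmem : ∀ y : X, y ∈ Xaxes ↔ InAxes (G := G) γ y := by
    intro y
    rw [hXaxes]
    exact Iff.rfl
  -- invariance of the axes set under the flow
  have hinv : ∀ (r : ℝ) (y : X), y ∈ Xaxes → r +ᵥ y ∈ Xaxes := by
    intro r y hy
    rw [hmem] at hy ⊢
    obtain ⟨hnp, g, t, ht, htγ, hrel⟩ := hy
    refine ⟨?_, g, t, ht, htγ, ?_⟩
    · rintro ⟨τ, hτ, hτe⟩
      apply hnp
      refine ⟨τ, hτ, ?_⟩
      have h2 := congrArg (fun z => -r +ᵥ z) hτe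
      simp only [← add_vadd] at h2
      have e1 : -r + (τ + r) = τ := by ring
      have e2 : -r + r = 0 := by ring
      rw [e1, e2, zero_vadd] at h2
      exact h2
    · rw [← add_vadd, add_comm, add_vadd, hrel, hcomm]
  -- characterization of the relation
  have hrel_iff : ∀ u v : ↥Xaxes, S u v ↔ ∃ τ : ℝ, τ +ᵥ (v : X) = (u : X) := by
    intro u v
    rw [Setoid.comap_rel, AddAction.orbitRel_apply, AddAction.mem_orbit_iff]
  -- the quotient map is open
  have hopen : IsOpenMap (Quotient.mk' : ↥Xaxes → Quotient S) := by
    intro U hU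
    rw [← isQuotientMap_quotient_mk'.isOpen_preimage]
    have hcont : ∀ r : ℝ, Continuous (fun u : ↥Xaxes =>
        (⟨-r +ᵥ (u : X), hinv _ _ u.2⟩ : ↥Xaxes)) := by
      intro r
      refine Continuous.subtype_mk ?_ _
      exact hflowcont.comp (continuous_const.prodMk continuous_subtype_val)
    have hpre : (Quotient.mk' : ↥Xaxes → Quotient S) ⁻¹' (Quotient.mk' '' U) =
        ⋃ r : ℝ, (fun u : ↥Xaxes => (⟨-r +ᵥ (u : X), hinv _ _ u.2⟩ : ↥Xaxes)) ⁻¹' U := by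
      ext u
      simp only [Set.mem_preimage, Set.mem_iUnion, Set.mem_image]
      constructor
      · rintro ⟨v, hvU, hveq⟩
        have hr : S v u := Quotient.eq'.mp hveq
        obtain ⟨τ, hτ⟩ := (hrel_iff v u).mp hr
        refine ⟨-τ, ?_⟩
        have : (⟨-(-τ) +ᵥ (u : X), hinv _ _ u.2⟩ : ↥Xaxes) = v := by
          apply Subtype.ext
          simp only [neg_neg]
          exact hτ
        rwa [this]
      · rintro ⟨r, hrU⟩
        refine ⟨_, hrU, ?_⟩
        apply Quotient.sound'
        refine (hrel_iff _ u).mpr ⟨-r, rfl⟩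
    rw [hpre]
    exact isOpen_iUnion fun r => (hcont r).isOpen_preimage U hU
  -- the orbit relation is closed
  have hRclosed : IsClosed {p : ↥Xaxes × ↥Xaxes | S p.1 p.2} := by
    refine IsSeqClosed.isClosed ?_
    intro w p hw hlim
    have h1 : Tendsto (fun n => ((w n).1 : X)) atTop (𝓝 (p.1 : X)) :=
      ((continuous_subtype_val.comp continuous_fst).tendsto p).comp hlim
    have h2 : Tendsto (fun n => ((w n).2 : X)) atTop (𝓝 (p.2 : X)) :=
      ((continuous_subtype_val.comp continuous_snd).tendsto p).comp hlim
    have hrel : ∀ n, ∃ τ : ℝ, τ +ᵥ ((w n).2 : X) = ((w n).1 : X) :=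
      fun n => (hrel_iff _ _).mp (hw n)
    choose τ hτ using hrel
    obtain ⟨s₀, hs₀⟩ := rel_closed hiso hproper hflowcont hcomm hγ h2 h1
      (fun n => (hmem _).mp ((w n).2).2) (fun n => (hmem _).mp ((w n).1).2) hτ
    exact (hrel_iff p.1 p.2).mpr ⟨s₀, hs₀⟩
  -- Hausdorff
  haveI hT2 : T2Space (Quotient S) := by
    constructor
    intro qa qb hne
    induction qa using Quotient.inductionOn' with
    | h a =>
    induction qb using Quotient.inductionOn' with
    | h b =>
    have hnr : ¬ S a b := fun h => hne (Quotient.sound' h)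
    obtain ⟨Ua, Ub, hUa, hUb, haU, hbU, hsub⟩ :=
      isOpen_prod_iff.mp hRclosed.isOpen_compl a b hnr
    refine ⟨Quotient.mk' '' Ua, Quotient.mk' '' Ub, hopen _ hUa, hopen _ hUb,
      ⟨a, haU, rfl⟩, ⟨b, hbU, rfl⟩, ?_⟩
    rw [Set.disjoint_left]
    rintro z ⟨u, huU, hueq⟩ ⟨v, hvV, hveq⟩
    have : S u v := Quotient.eq'.mp (hueq.trans hveq.symm)
    exact (hsub (Set.mk_mem_prod huU hvV)) this
  -- second countable
  haveI hSC : SecondCountableTopology (Quotient S) := by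
    refine TopologicalSpace.IsTopologicalBasis.secondCountableTopology
      (b := (fun W => (Quotient.mk' : ↥Xaxes → Quotient S) '' W) ''
        (TopologicalSpace.countableBasis ↥Xaxes)) ?_ ?_
    · refine TopologicalSpace.isTopologicalBasis_of_isOpen_of_nhds ?_ ?_
      · rintro u ⟨W, hW, rfl⟩
        exact hopen _ ((TopologicalSpace.isBasis_countableBasis _).isOpen hW)
      · intro w V hwV hV
        induction w using Quotient.inductionOn' with
        | h u =>
        have hupre : u ∈ (Quotient.mk' : ↥Xaxes → Quotient S) ⁻¹' V := hwV
        have hpreopen : IsOpen ((Quotient.mk' : ↥Xaxes → Quotient S) ⁻¹' V) :=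
          hV.preimage continuous_quotient_mk'
        obtain ⟨W, hWb, huW, hWsub⟩ :=
          (TopologicalSpace.isBasis_countableBasis ↥Xaxes).exists_subset_of_mem_open
            hupre hpreopen
        exact ⟨Quotient.mk' '' W, ⟨W, hWb, rfl⟩, ⟨u, huW, rfl⟩,
          Set.image_subset_iff.mpr hWsub⟩
    · exact (TopologicalSpace.countable_countableBasis _).image _
  -- weakly locally compact
  haveI hWLC : WeaklyLocallyCompactSpace (Quotient S) := by
    constructor
    intro w
    induction w using Quotient.inductionOn' with
    | h u =>
    obtain ⟨ε, hε, hcball, hclsub⟩ :=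
      locally_closed hiso hproper hflowcont hcomm hγ ((hmem _).mp u.2)
    have hAset : {y : X | InAxes (G := G) γ y} = Xaxes := by
      ext y
      exact (hmem y).symm
    have hScpt : IsCompact (Subtype.val ⁻¹' Metric.closedBall (u : X) ε : Set ↥Xaxes) := by
      rw [Topology.IsEmbedding.subtypeVal.isCompact_iff]
      rw [Subtype.image_preimage_coe]
      have hXeq : Xaxes ∩ Metric.closedBall (u : X) ε =
          closure {y : X | InAxes (G := G) γ y} ∩ Metric.closedBall (u : X) ε := by
        apply Set.Subset.antisymm
        · refine Set.inter_subset_inter_left _ ?_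
          rw [← hAset]
          exact subset_closure
        · intro y hy
          refine ⟨?_, hy.2⟩
          rw [← hAset]
          exact hclsub hy
      rw [hXeq]
      exact hcball.of_isClosed_subset (isClosed_closure.inter Metric.isClosed_closedBall)
        Set.inter_subset_right
    refine ⟨Quotient.mk' '' (Subtype.val ⁻¹' Metric.closedBall (u : X) ε),
      hScpt.image continuous_quotient_mk', ?_⟩
    have hball : IsOpen (Subtype.val ⁻¹' Metric.ball (u : X) ε : Set ↥Xaxes) :=
      Metric.isOpen_ball.preimage continuous_subtype_val
    have hmemnhds : Quotient.mk' '' (Subtype.val ⁻¹' Metric.ball (u : X) ε) ∈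
        𝓝 (Quotient.mk' u : Quotient S) :=
      (hopen _ hball).mem_nhds ⟨u, Metric.mem_ball_self hε, rfl⟩
    exact Filter.mem_of_superset hmemnhds
      (Set.image_mono (Set.preimage_mono Metric.ball_subset_closedBall))
  haveI hLC : LocallyCompactSpace (Quotient S) :=
    WeaklyLocallyCompactSpace.locallyCompactSpace
  exact ⟨inferInstance, inferInstance, inferInstance, inferInstance, inferInstance⟩
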